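/- arXiv:1009.0843 — 3 statements merged into one kernel-verified Lean document; each statement's English description precedes it below -/
import Mathlib

section
/- The matrix M(π) associated to a permutation is totally unimodular: for any permutation π of {1,…,n}, the (n+1)×(n+1) matrix M(π) defined by M_{ij} = 1 if π̃(j−1) < i ≤ π̃(j), M_{ij} = −1 if π̃(j) < i ≤ π̃(j−1), and 0 otherwise (where π̃ extends π by π̃(0)=0, π̃(n+1)=n+1), has all subdeterminants equal to 0, 1, or −1. In particular det M(π) = ±1 and M(π) is invertible over ℤ. -/
/-- The extension `π̃` of a permutation `π` of `{1,…,n}` to `{0,1,…,n+1}` fixing `0`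
and `n+1` (represented as a function on `ℕ`, acting as the identity outside `[1,n]`;
internally `{1,…,n}` is identified with `Fin n` shifted by one). -/
def permExt (n : ℕ) (π : Equiv.Perm (Fin n)) : ℕ → ℕ := fun k =>
  if h : 1 ≤ k ∧ k ≤ n then (π ⟨k - 1, by omega⟩).val + 1 else k

/-- The `(n+1) × (n+1)` matrix `M(π)` (rows and columns indexed by `{1,…,n+1}`):
`M_{ij} = 1` if `π̃(j−1) < i ≤ π̃(j)`, `M_{ij} = −1` if `π̃(j) < i ≤ π̃(j−1)`, else `0`. -/
def permMatrix (n : ℕ) (π : Equiv.Perm (Fin n)) :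
    Matrix (Fin (n + 1)) (Fin (n + 1)) ℤ := fun i j =>
  if permExt n π j.val < i.val + 1 ∧ i.val + 1 ≤ permExt n π (j.val + 1) then 1
  else if permExt n π (j.val + 1) < i.val + 1 ∧ i.val + 1 ≤ permExt n π j.val then -1
  else 0

section Aux

lemma succAbove_val {k : ℕ} (i : Fin (k+1)) (i' : Fin k) :
    (i.succAbove i').val = if i'.val < i.val then i'.val else i'.val + 1 := by
  rw [Fin.succAbove]
  split_ifs with h1 h2 h2 <;> simp_all [Fin.lt_def, Fin.val_succ]

lemma incidence_det : ∀ (k : ℕ) (B : Matrix (Fin k) (Fin k) ℤ) (p q : Fin k → ℕ),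
    (∀ i j, B i j = (if p j = i.val then 1 else 0) - (if q j = i.val then 1 else 0)) →
    B.det ∈ Set.range (SignType.cast (α := ℤ)) := by
  intro k
  induction k using Nat.strong_induction_on with
  | _ k ih =>
    intro B p q hB
    match k with
    | 0 => exact ⟨1, by simp⟩
    | (k'+1) =>
      by_cases hz : ∃ j, ∀ i, B i j = 0
      · obtain ⟨j, hj⟩ := hz
        exact ⟨0, by simpa using (Matrix.det_eq_zero_of_column_eq_zero j hj).symm⟩
      by_cases hone : ∃ j i, (∀ i', i' ≠ i → B i' j = 0) ∧ (B i j = 1 ∨ B i j = -1)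
      · obtain ⟨j, i, hcol, hval⟩ := hone
        rw [Matrix.det_succ_column B j,
          Finset.sum_eq_single i (fun b _ hb => by rw [hcol b hb]; ring) (by simp)]
        set p' : Fin k' → ℕ := fun j' =>
          if p (j.succAbove j') < i.val then p (j.succAbove j')
          else if p (j.succAbove j') = i.val then k' else p (j.succAbove j') - 1 with hp'
        set q' : Fin k' → ℕ := fun j' =>
          if q (j.succAbove j') < i.val then q (j.succAbove j')
          else if q (j.succAbove j') = i.val then k' else q (j.succAbove j') - 1 with hq'
        have hminor : ∀ i' j', (B.submatrix i.succAbove j.succAbove) i' j' =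
            (if p' j' = i'.val then 1 else 0) - (if q' j' = i'.val then 1 else 0) := by
          intro i' j'
          rw [Matrix.submatrix_apply, hB]
          have h1 := succAbove_val i i'
          have h2 : i'.val < k' := i'.isLt
          have h3 : i.val < k' + 1 := i.isLt
          by_cases hlt : i'.val < i.val
          · rw [if_pos hlt] at h1
            rw [h1]
            simp only [hp', hq']
            congr 1 <;> · split_ifs <;> omega
          · rw [if_neg hlt] at h1
            rw [h1]
            simp only [hp', hq']
            congr 1 <;> · split_ifs <;> omega
        obtain ⟨s, hs⟩ := ih k' (by omega) _ p' q' hminor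
        have hsneg : ((-s : SignType) : ℤ) = -(s : ℤ) := by cases s <;> simp
        have hε : (-1 : ℤ) ^ (i.val + j.val) = 1 ∨ (-1 : ℤ) ^ (i.val + j.val) = -1 := by
          rcases Nat.even_or_odd (i.val + j.val) with h | h
          · exact Or.inl h.neg_one_pow
          · exact Or.inr h.neg_one_pow
        rcases hval with hv | hv <;> rcases hε with he | he
        · exact ⟨s, by rw [he, hv, hs]; ring⟩
        · exact ⟨-s, by rw [he, hv, hsneg, hs]; ring⟩
        · exact ⟨-s, by rw [he, hv, hsneg, hs]; ring⟩
        · exact ⟨s, by rw [he, hv, hs]; ring⟩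
      · push_neg at hz hone
        have hsum : ∀ j, ∑ i, B i j = 0 := by
          intro j
          obtain ⟨i0, hi0⟩ := hz j
          have hpj : p j < k' + 1 ∧ q j < k' + 1 ∧ p j ≠ q j := by
            by_contra hcon
            by_cases hp : p j < k' + 1
            · by_cases hq : q j < k' + 1
              · have hpq : p j = q j := by tauto
                exact hi0 (by rw [hB]; simp [hpq])
              · have h1 : B ⟨p j, hp⟩ j = 1 := by
                  rw [hB]
                  have hne : q j ≠ (⟨p j, hp⟩ : Fin (k'+1)).val := by simp; omega
                  simp [hne]
                refine (hone j ⟨p j, hp⟩ ?_).1 h1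
                intro i' hi'
                rw [hB]
                have h2 : p j ≠ i'.val := fun h => hi' (Fin.ext (by simp [← h]))
                have h3 : q j ≠ i'.val := by have := i'.isLt; omega
                simp [h2, h3]
            · by_cases hq : q j < k' + 1
              · have h1 : B ⟨q j, hq⟩ j = -1 := by
                  rw [hB]
                  have hne : p j ≠ (⟨q j, hq⟩ : Fin (k'+1)).val := by simp; omega
                  simp [hne]
                refine (hone j ⟨q j, hq⟩ ?_).2 h1
                intro i' hi'
                rw [hB]
                have h2 : q j ≠ i'.val := fun h => hi' (Fin.ext (by simp [← h]))
                have h3 : p j ≠ i'.val := by have := i'.isLt; omega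
                simp [h2, h3]
              · refine hi0 ?_
                rw [hB]
                have h2 : p j ≠ i0.val := by have := i0.isLt; omega
                have h3 : q j ≠ i0.val := by have := i0.isLt; omega
                simp [h2, h3]
          obtain ⟨hp, hq, hpq⟩ := hpj
          have e1 : ∑ i : Fin (k'+1), (if p j = i.val then (1:ℤ) else 0) = 1 := by
            rw [Finset.sum_eq_single ⟨p j, hp⟩
              (fun b _ hb => by
                have : p j ≠ b.val := fun h => hb (Fin.ext h.symm)
                simp [this]) (by simp)]
            simp
          have e2 : ∑ i : Fin (k'+1), (if q j = i.val then (1:ℤ) else 0) = 1 := by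
            rw [Finset.sum_eq_single ⟨q j, hq⟩
              (fun b _ hb => by
                have : q j ≠ b.val := fun h => hb (Fin.ext h.symm)
                simp [this]) (by simp)]
            simp
          simp only [hB, Finset.sum_sub_distrib, e1, e2, sub_self]
        refine ⟨0, ?_⟩
        have hdet : B.det = 0 := by
          rw [← Matrix.exists_vecMul_eq_zero_iff]
          refine ⟨fun _ => 1, fun h => one_ne_zero (congrFun h 0), ?_⟩
          funext j
          simpa [Matrix.vecMul, dotProduct] using hsum j
        simp [hdet]

/-- For a strictly monotone tuple, the set where `f i + 1 ≤ c` is an initial segment. -/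
lemma exists_crossing {k : ℕ} (f : Fin k → ℕ) (hf : StrictMono f) (c : ℕ) :
    ∃ m ≤ k, ∀ i : Fin k, (f i + 1 ≤ c ↔ i.val < m) := by
  classical
  refine ⟨(Finset.univ.filter (fun i : Fin k => f i + 1 ≤ c)).card, ?_, ?_⟩
  · have := Finset.card_filter_le (Finset.univ : Finset (Fin k)) (fun i => f i + 1 ≤ c)
    simpa using this
  · intro i
    constructor
    · intro hi
      have hsub : Finset.Iic i ⊆ Finset.univ.filter (fun i : Fin k => f i + 1 ≤ c) := by
        intro i' hi'
        simp only [Finset.mem_Iic] at hi'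
        simp only [Finset.mem_filter, Finset.mem_univ, true_and]
        exact le_trans (by have := hf.monotone hi'; omega) hi
      have := Finset.card_le_card hsub
      rw [Fin.card_Iic] at this
      omega
    · intro hi
      by_contra hnc
      have hsub : Finset.univ.filter (fun i' : Fin k => f i' + 1 ≤ c) ⊆ Finset.Iio i := by
        intro i' hi'
        simp only [Finset.mem_filter, Finset.mem_univ, true_and] at hi'
        simp only [Finset.mem_Iio]
        by_contra hge
        exact hnc (le_trans (by have := hf.monotone (not_lt.mp hge); omega) hi')
      have := Finset.card_le_card hsub
      rw [Fin.card_Iio] at this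
      omega

/-- The difference matrix `1 - shift`. -/
def diffMatrix (k : ℕ) : Matrix (Fin k) (Fin k) ℤ := fun i j =>
  (if i = j then 1 else 0) - (if i.val + 1 = j.val then 1 else 0)

lemma diffMatrix_det (k : ℕ) : (diffMatrix k).det = 1 := by
  have ht : (diffMatrix k).BlockTriangular id := by
    intro i j hij
    simp only [id] at hij
    have h1 : i ≠ j := ne_of_gt hij
    have h2 : i.val + 1 ≠ j.val := by
      have := hij
      rw [Fin.lt_def] at this
      omega
    simp [diffMatrix, h1, h2]
  rw [Matrix.det_of_upperTriangular ht]
  apply Finset.prod_eq_one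
  intro i _
  simp [diffMatrix]

lemma diffMatrix_mul_apply {k : ℕ} (S : Matrix (Fin k) (Fin k) ℤ) (i j : Fin k) :
    (diffMatrix k * S) i j
      = S i j - (if h : i.val + 1 < k then S ⟨i.val + 1, h⟩ j else 0) := by
  rw [Matrix.mul_apply]
  simp only [diffMatrix, sub_mul]
  rw [Finset.sum_sub_distrib]
  congr 1
  · rw [Finset.sum_eq_single i (fun b _ hb => by simp [Ne.symm hb]) (by simp)]
    simp
  · by_cases h : i.val + 1 < k
    · rw [Finset.sum_eq_single ⟨i.val + 1, h⟩
        (fun b _ hb => by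
          have : i.val + 1 ≠ b.val := fun hh => hb (Fin.ext hh.symm)
          simp [this]) (by simp), dif_pos h]
      simp
    · rw [dif_neg h]
      apply Finset.sum_eq_zero
      intro b _
      have : i.val + 1 ≠ b.val := by have := b.isLt; omega
      simp [this]

lemma permExt_le {n : ℕ} (π : Equiv.Perm (Fin n)) {k : ℕ} (hk : k ≤ n + 1) :
    permExt n π k ≤ n + 1 := by
  unfold permExt
  split_ifs with h
  · have := (π ⟨k - 1, by omega⟩).isLt
    omega
  · omega

lemma permExt_pos {n : ℕ} (π : Equiv.Perm (Fin n)) {k : ℕ} (hk : 1 ≤ k) :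
    1 ≤ permExt n π k := by
  unfold permExt
  split_ifs with h <;> omega

lemma permExt_inv {n : ℕ} (π : Equiv.Perm (Fin n)) {k : ℕ} (h1 : 1 ≤ k) (h2 : k ≤ n + 1) :
    permExt n π⁻¹ (permExt n π k) = k := by
  by_cases h : k ≤ n
  · have hx : permExt n π k = (π ⟨k - 1, by omega⟩).val + 1 := by
      unfold permExt
      rw [dif_pos ⟨h1, h⟩]
    have hlt := (π ⟨k - 1, by omega⟩).isLt
    rw [hx]
    unfold permExt
    rw [dif_pos ⟨by omega, by omega⟩]
    simp only [Nat.add_sub_cancel, Fin.eta, Equiv.Perm.inv_def, Equiv.symm_apply_apply]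
    omega
  · have hk : k = n + 1 := by omega
    have hx : permExt n π k = k := by
      unfold permExt
      rw [dif_neg (by omega)]
    rw [hx]
    unfold permExt
    rw [dif_neg (by omega)]

lemma permMatrix_apply' (n : ℕ) (π : Equiv.Perm (Fin n)) (i j : Fin (n + 1)) :
    permMatrix n π i j
      = (if i.val + 1 ≤ permExt n π (j.val + 1) then 1 else 0)
        - (if i.val + 1 ≤ permExt n π j.val then 1 else 0) := by
  simp only [permMatrix]
  split_ifs <;> omega

/-- The permutation of `Fin (n+1)` given by `j ↦ π̃(j+1) − 1`. -/
def permTau (n : ℕ) (π : Equiv.Perm (Fin n)) : Equiv.Perm (Fin (n + 1)) where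
  toFun j := ⟨permExt n π (j.val + 1) - 1, by
    have := permExt_le π (k := j.val + 1) (by omega)
    have := permExt_pos π (k := j.val + 1) (by omega)
    omega⟩
  invFun i := ⟨permExt n π⁻¹ (i.val + 1) - 1, by
    have := permExt_le π⁻¹ (k := i.val + 1) (by omega)
    have := permExt_pos π⁻¹ (k := i.val + 1) (by omega)
    omega⟩
  left_inv j := by
    have hle := permExt_le π (k := j.val + 1) (by omega)
    have hpos := permExt_pos π (k := j.val + 1) (by omega)
    apply Fin.ext
    simp only
    rw [Nat.sub_add_cancel hpos, permExt_inv π (by omega) (by omega)]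
    omega
  right_inv i := by
    have hle := permExt_le π⁻¹ (k := i.val + 1) (by omega)
    have hpos := permExt_pos π⁻¹ (k := i.val + 1) (by omega)
    apply Fin.ext
    simp only
    rw [Nat.sub_add_cancel hpos]
    have h := permExt_inv π⁻¹ (k := i.val + 1) (by omega) (by omega)
    rw [inv_inv] at h
    rw [h]
    omega

lemma permTau_val {n : ℕ} (π : Equiv.Perm (Fin n)) (j : Fin (n + 1)) :
    (permTau n π j).val + 1 = permExt n π (j.val + 1) := by
  have := permExt_pos π (k := j.val + 1) (by omega)
  simp only [permTau, Equiv.coe_fn_mk]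
  omega

end Aux

/-- `M(π)` is totally unimodular: all subdeterminants are `0` or `±1`; in particular
`det M(π) = ±1` and `M(π)` is invertible over `ℤ`. -/
theorem permMatrix_totallyUnimodular (n : ℕ) (π : Equiv.Perm (Fin n)) :
    (permMatrix n π).IsTotallyUnimodular ∧
    ((permMatrix n π).det = 1 ∨ (permMatrix n π).det = -1) ∧
    IsUnit (permMatrix n π) := by
  have key : ∀ (k : ℕ) (f' : Fin k → Fin (n+1)), StrictMono f' → ∀ g' : Fin k → Fin (n+1),
      ((permMatrix n π).submatrix f' g').det ∈ Set.range (SignType.cast (α := ℤ)) := by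
    intro k f' hf' g'
    have hvm : StrictMono (fun i => (f' i).val) := fun a b h => hf' h
    choose mB hmB hmB' using
      fun j : Fin k => exists_crossing _ hvm (permExt n π ((g' j).val + 1))
    choose mA hmA hmA' using
      fun j : Fin k => exists_crossing _ hvm (permExt n π (g' j).val)
    set p : Fin k → ℕ := fun j => if mB j = 0 then k else mB j - 1 with hp
    set q : Fin k → ℕ := fun j => if mA j = 0 then k else mA j - 1 with hq
    have hDS : ∀ i j, (diffMatrix k * (permMatrix n π).submatrix f' g') i j
        = (if p j = i.val then 1 else 0) - (if q j = i.val then 1 else 0) := by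
      intro i j
      rw [diffMatrix_mul_apply]
      have hik : i.val < k := i.isLt
      have hmBk := hmB j
      have hmAk := hmA j
      by_cases h : i.val + 1 < k
      · rw [dif_pos h]
        rw [Matrix.submatrix_apply, Matrix.submatrix_apply,
          permMatrix_apply', permMatrix_apply']
        rw [if_congr (hmB' j i) rfl rfl, if_congr (hmA' j i) rfl rfl,
          if_congr (hmB' j ⟨i.val + 1, h⟩) rfl rfl, if_congr (hmA' j ⟨i.val + 1, h⟩) rfl rfl]
        simp only [hp, hq]
        split_ifs <;> omega
      · rw [dif_neg h]
        rw [Matrix.submatrix_apply, permMatrix_apply']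
        rw [if_congr (hmB' j i) rfl rfl, if_congr (hmA' j i) rfl rfl]
        simp only [hp, hq]
        split_ifs <;> omega
    have hinc := incidence_det k _ p q hDS
    rwa [Matrix.det_mul, diffMatrix_det, one_mul] at hinc
  have tu : (permMatrix n π).IsTotallyUnimodular := by
    intro k f g hf hg
    set σ := Tuple.sort f with hσ
    have hmono : StrictMono (f ∘ σ) :=
      (Tuple.monotone_sort f).strictMono_of_injective (hf.comp σ.injective)
    have h1 := key k (f ∘ σ) hmono g
    have h2 : ((permMatrix n π).submatrix (f ∘ σ) g)
        = ((permMatrix n π).submatrix f g).submatrix σ id := by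
      ext i j
      simp [Matrix.submatrix_apply]
    rw [h2, Matrix.det_permute] at h1
    obtain ⟨s, hs⟩ := h1
    rcases Int.units_eq_one_or (Equiv.Perm.sign σ) with hu | hu
    · refine ⟨s, ?_⟩
      rw [hu] at hs
      simpa using hs
    · refine ⟨-s, ?_⟩
      have hsneg : ((-s : SignType) : ℤ) = -(s : ℤ) := by cases s <;> simp
      rw [hu] at hs
      rw [hsneg]
      push_cast at hs
      linarith
  refine ⟨tu, ?_⟩
  have hDM : ∀ i j : Fin (n+1), (diffMatrix (n+1) * permMatrix n π) i j
      = (if i.val + 1 = permExt n π (j.val + 1) then 1 else 0)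
        - (if i.val + 1 = permExt n π j.val then 1 else 0) := by
    intro i j
    rw [diffMatrix_mul_apply]
    have hb := permExt_le π (k := j.val + 1) (by omega)
    have ha := permExt_le π (k := j.val) (by omega)
    by_cases h : i.val + 1 < n + 1
    · rw [dif_pos h, permMatrix_apply', permMatrix_apply']
      have hv : (⟨i.val + 1, h⟩ : Fin (n+1)).val = i.val + 1 := rfl
      simp only [hv]
      split_ifs <;> omega
    · rw [dif_neg h, permMatrix_apply']
      have hin : i.val = n := by have := i.isLt; omega
      split_ifs <;> omega
  have hsub : ((diffMatrix (n+1) * permMatrix n π).submatrix (permTau n π) id)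
      = diffMatrix (n+1) := by
    ext i j
    rw [Matrix.submatrix_apply, id_eq, hDM, diffMatrix]
    congr 1
    · by_cases hij : i = j
      · subst hij
        simp [← permTau_val π i]
      · have hne : (permTau n π i).val + 1 ≠ permExt n π (j.val + 1) := by
          rw [← permTau_val π j]
          intro hcon
          exact hij ((permTau n π).injective (Fin.ext (by omega)))
        simp [hne, hij]
    · by_cases hj0 : j.val = 0
      · have h0 : permExt n π j.val = 0 := by
          rw [hj0]
          unfold permExt
          rw [dif_neg (by omega)]
        have hne1 : (permTau n π i).val + 1 ≠ permExt n π j.val := by omega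
        have hne2 : i.val + 1 ≠ j.val := by omega
        simp [hne1, hne2]
      · set j0 : Fin (n+1) := ⟨j.val - 1, by omega⟩ with hj0def
        have hpe : permExt n π j.val = (permTau n π j0).val + 1 := by
          rw [permTau_val]
          congr 1
          simp [hj0def]
          omega
        rw [hpe]
        by_cases hij : i = j0
        · subst hij
          simp [hj0def]
          omega
        · have hne : (permTau n π i).val + 1 ≠ (permTau n π j0).val + 1 := by
            intro hcon
            exact hij ((permTau n π).injective (Fin.ext (by omega)))
          have hne2 : i.val + 1 ≠ j.val := by
            intro hcon
            apply hij
            apply Fin.ext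
            simp [hj0def]
            omega
          simp [hne, hne2]
          omega
  have hdet1 : ((diffMatrix (n+1) * permMatrix n π).submatrix (permTau n π) id).det = 1 := by
    rw [hsub, diffMatrix_det]
  rw [Matrix.det_permute, Matrix.det_mul, diffMatrix_det, one_mul] at hdet1
  have hdet : (permMatrix n π).det = 1 ∨ (permMatrix n π).det = -1 := by
    rcases Int.units_eq_one_or (Equiv.Perm.sign (permTau n π)) with hu | hu <;>
      rw [hu] at hdet1 <;> push_cast at hdet1
    · left; linarith
    · right; linarith
  refine ⟨hdet, ?_⟩
  rw [Matrix.isUnit_iff_isUnit_det, Int.isUnit_iff]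
  tauto
end

section
/- The identity is the unique permutation of degree zero, and every non-identity permutation has degree at least 2: with the peak/valley/slope/ladder classification, deg(id_n) = 0, and for any π ∈ S_n with π ≠ id, deg(π) ≥ 2. -/
/-- `(j, π(j))` is a peak: `π(j) < min{π̃(j−1), π̃(j+1)}`
(here `j : Fin n` represents the index `j+1 ∈ {1,…,n}`). -/
def IsPeak (n : ℕ) (π : Equiv.Perm (Fin n)) (j : Fin n) : Prop :=
  permExt n π (j.val + 1) < min (permExt n π j.val) (permExt n π (j.val + 2))

/-- `(j, π(j))` is a valley: `π(j) > max{π̃(j−1), π̃(j+1)}`. -/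
def IsValley (n : ℕ) (π : Equiv.Perm (Fin n)) (j : Fin n) : Prop :=
  max (permExt n π j.val) (permExt n π (j.val + 2)) < permExt n π (j.val + 1)

/-- `(j, π(j))` is a ladder: `π(j) − 1 ∈ {π̃(j−1), π̃(j+1)}` and it is not a valley. -/
def IsLadder (n : ℕ) (π : Equiv.Perm (Fin n)) (j : Fin n) : Prop :=
  (permExt n π (j.val + 1) = permExt n π j.val + 1 ∨
    permExt n π (j.val + 1) = permExt n π (j.val + 2) + 1) ∧ ¬ IsValley n π j

/-- `(j, π(j))` is a slope: neither a peak, a valley, nor a ladder. -/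
def IsSlope (n : ℕ) (π : Equiv.Perm (Fin n)) (j : Fin n) : Prop :=
  ¬ IsPeak n π j ∧ ¬ IsValley n π j ∧ ¬ IsLadder n π j

instance (n : ℕ) (π : Equiv.Perm (Fin n)) : DecidablePred (IsPeak n π) :=
  fun _ => inferInstanceAs (Decidable (_ < _))

instance (n : ℕ) (π : Equiv.Perm (Fin n)) : DecidablePred (IsValley n π) :=
  fun _ => inferInstanceAs (Decidable (_ < _))

instance (n : ℕ) (π : Equiv.Perm (Fin n)) : DecidablePred (IsLadder n π) :=
  fun _ => inferInstanceAs (Decidable (_ ∧ _))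

instance (n : ℕ) (π : Equiv.Perm (Fin n)) : DecidablePred (IsSlope n π) :=
  fun _ => inferInstanceAs (Decidable (_ ∧ _))

/-- The degree of a permutation: `deg(π) = n − ℓ(π)` where `ℓ(π)` is the number of
ladder indices. -/
def permDeg (n : ℕ) (π : Equiv.Perm (Fin n)) : ℕ :=
  n - (Finset.univ.filter fun j : Fin n => IsLadder n π j).card


lemma permExt_zero (n : ℕ) (π : Equiv.Perm (Fin n)) : permExt n π 0 = 0 := by
  unfold permExt; simp

lemma permExt_top (n : ℕ) (π : Equiv.Perm (Fin n)) : permExt n π (n+1) = n+1 := by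
  unfold permExt; rw [dif_neg (by omega)]

lemma permExt_mem (n : ℕ) (π : Equiv.Perm (Fin n)) (k : ℕ) (h1 : 1 ≤ k) (h2 : k ≤ n) :
    1 ≤ permExt n π k ∧ permExt n π k ≤ n := by
  unfold permExt
  rw [dif_pos ⟨h1, h2⟩]
  have := (π ⟨k - 1, by omega⟩).isLt
  omega

lemma permExt_one (n k : ℕ) : permExt n 1 k = k := by
  unfold permExt
  split
  · simp; omega
  · rfl

lemma permExt_inj (n : ℕ) (π : Equiv.Perm (Fin n)) {k l : ℕ} (_hk : k ≤ n+1) (_hl : l ≤ n+1)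
    (h : permExt n π k = permExt n π l) : k = l := by
  unfold permExt at h
  split at h <;> split at h <;> rename_i h1 h2
  · have h3 := π.injective (Fin.ext (Nat.succ_injective h))
    simp only [Fin.mk.injEq] at h3
    omega
  · have := (π ⟨k - 1, by omega⟩).isLt; omega
  · have := (π ⟨l - 1, by omega⟩).isLt; omega
  · exact h

lemma ladder_one (n : ℕ) (j : Fin n) : IsLadder n 1 j := by
  constructor
  · left; rw [permExt_one, permExt_one]
  · intro hv
    unfold IsValley at hv
    rw [permExt_one, permExt_one, permExt_one] at hv
    omega

lemma not_ladder_of_valley {n : ℕ} {π : Equiv.Perm (Fin n)} {j : Fin n}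
    (h : IsValley n π j) : ¬ IsLadder n π j := fun hl => hl.2 h

lemma not_ladder_of_peak {n : ℕ} {π : Equiv.Perm (Fin n)} {j : Fin n}
    (h : IsPeak n π j) : ¬ IsLadder n π j := by
  intro hl
  unfold IsPeak at h
  simp only [lt_min_iff] at h
  rcases hl.1 with h1 | h1 <;> omega

/-- The identity is the unique permutation of degree zero, and every non-identity
permutation has degree at least `2`. -/
theorem degree_zero_iff_id (n : ℕ) :
    permDeg n 1 = 0 ∧ ∀ π : Equiv.Perm (Fin n), π ≠ 1 → 2 ≤ permDeg n π := by
  constructor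
  · unfold permDeg
    rw [Finset.filter_true_of_mem (fun j _ => ladder_one n j), Finset.card_univ,
      Fintype.card_fin]
    omega
  · intro π hπ
    -- there is a descent
    have key : ∃ p, 1 ≤ p ∧ p ≤ n ∧ permExt n π (p+1) < permExt n π p := by
      by_contra hc
      push_neg at hc
      have asc : ∀ p, p ≤ n → permExt n π p < permExt n π (p+1) := by
        intro p hp
        rcases Nat.eq_zero_or_pos p with rfl | hp1
        · rw [permExt_zero]
          rcases Nat.eq_zero_or_pos n with rfl | hn
          · rw [permExt_top]; omega
          · exact (permExt_mem n π 1 le_rfl hn).1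
        · have hne : permExt n π p ≠ permExt n π (p+1) := fun h =>
            absurd (permExt_inj n π (by omega) (by omega) h) (by omega)
          exact lt_of_le_of_ne (hc p hp1 hp) hne
      have mono : ∀ d k, k + d ≤ n + 1 → permExt n π k + d ≤ permExt n π (k + d) := by
        intro d
        induction d with
        | zero => simp
        | succ d ih =>
          intro k h
          have h1 := ih k (by omega)
          have h2 := asc (k + d) (by omega)
          have h3 : k + (d + 1) = (k + d) + 1 := by omega
          rw [h3]
          omega
      have hid : ∀ k, k ≤ n+1 → permExt n π k = k := by
        intro k hk
        have h1 := mono k 0 (by omega)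
        have h2 := mono (n+1-k) k (by omega)
        rw [permExt_zero] at h1
        rw [show k + (n+1-k) = n+1 by omega, permExt_top] at h2
        simp at h1
        omega
      apply hπ
      ext j
      have h4 := hid (j.val + 1) (by omega)
      unfold permExt at h4
      rw [dif_pos ⟨by omega, by omega⟩] at h4
      have h5 : (⟨j.val + 1 - 1, by omega⟩ : Fin n) = j := Fin.ext (by simp)
      rw [h5] at h4
      simp only [Equiv.Perm.coe_one, id_eq]
      exact Nat.succ_injective h4
    obtain ⟨p₀, hp₀1, hp₀n, hdes⟩ := key
    set P : ℕ → Prop := fun p => permExt n π (p+1) < permExt n π p with hP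
    have hPdec : DecidablePred P := fun p => inferInstanceAs (Decidable (_ < _))
    have hex : ∃ p, P p := ⟨p₀, hdes⟩
    -- first descent m
    set m := Nat.find hex with hm
    have hmP : permExt n π (m+1) < permExt n π m := Nat.find_spec hex
    have hmle : m ≤ p₀ := Nat.find_min' hex hdes
    have hm1 : 1 ≤ m := by
      by_contra h
      have h0 : m = 0 := by omega
      rw [h0, permExt_zero] at hmP
      omega
    have asclow : ∀ q, q < m → permExt n π q < permExt n π (q+1) := by
      intro q hq
      have hnd : ¬ (permExt n π (q+1) < permExt n π q) := Nat.find_min hex hq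
      have hne : permExt n π q ≠ permExt n π (q+1) := fun h =>
        absurd (permExt_inj n π (by omega) (by omega) h) (by omega)
      omega
    -- last descent M
    set M := Nat.findGreatest P n with hM
    have hMP : permExt n π (M+1) < permExt n π M := by
      have h9 : P (Nat.findGreatest P n) :=
        Nat.findGreatest_spec (P := P) hp₀n (show P p₀ from hdes)
      rw [← hM] at h9
      exact h9
    have hMle : M ≤ n := Nat.findGreatest_le n
    have hM1 : 1 ≤ M := by
      by_contra h
      have h0 : M = 0 := by omega
      rw [h0, permExt_zero] at hMP
      omega
    have hMn : M < n := by
      rcases Nat.lt_or_ge M n with h | h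
      · exact h
      · exfalso
        have h0 : M = n := by omega
        rw [h0, permExt_top] at hMP
        have := permExt_mem n π n (by omega) le_rfl
        omega
    have aschigh : ∀ q, M < q → q ≤ n → permExt n π q < permExt n π (q+1) := by
      intro q hq hqn
      have hnd0 : ¬ P q := by
        apply Nat.findGreatest_is_greatest (P := P) (n := n) _ hqn
        rw [← hM]; exact hq
      have hnd : ¬ (permExt n π (q+1) < permExt n π q) := hnd0
      have hne : permExt n π q ≠ permExt n π (q+1) := fun h =>
        absurd (permExt_inj n π (by omega) (by omega) h) (by omega)
      omega
    -- the two non-ladder indices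
    have hmn : m ≤ n := le_trans hmle hp₀n
    set j₁ : Fin n := ⟨m - 1, by omega⟩ with hj₁
    set j₂ : Fin n := ⟨M, by omega⟩ with hj₂
    have hv : IsValley n π j₁ := by
      show max (permExt n π (m-1)) (permExt n π (m-1+2)) < permExt n π (m-1+1)
      rw [show m - 1 + 1 = m by omega, show m - 1 + 2 = m + 1 by omega]
      have h7 := asclow (m-1) (by omega)
      rw [show m - 1 + 1 = m by omega] at h7
      exact max_lt h7 hmP
    have hpk : IsPeak n π j₂ := by
      show permExt n π (M+1) < min (permExt n π M) (permExt n π (M+2))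
      rw [lt_min_iff]
      exact ⟨hMP, aschigh (M+1) (by omega) (by omega)⟩
    have hne12 : j₁ ≠ j₂ := by
      intro h
      rw [hj₁, hj₂, Fin.mk.injEq] at h
      have h8 : m = M + 1 := by omega
      have h6 := aschigh (M+1) (by omega) (by omega)
      rw [← h8] at h6
      omega
    have hsub : (Finset.univ.filter fun j : Fin n => IsLadder n π j) ⊆
        Finset.univ \ {j₁, j₂} := by
      intro j hj
      rw [Finset.mem_filter] at hj
      rw [Finset.mem_sdiff, Finset.mem_insert, Finset.mem_singleton]
      refine ⟨Finset.mem_univ _, ?_⟩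
      rintro (rfl | rfl)
      · exact not_ladder_of_valley hv hj.2
      · exact not_ladder_of_peak hpk hj.2
    have hcard : (Finset.univ.filter fun j : Fin n => IsLadder n π j).card ≤ n - 2 := by
      calc _ ≤ (Finset.univ \ ({j₁, j₂} : Finset (Fin n))).card := Finset.card_le_card hsub
        _ = n - 2 := by
          rw [Finset.card_sdiff_of_subset (by simp), Finset.card_univ, Fintype.card_fin,
            Finset.card_pair hne12]
    unfold permDeg
    have hn2 : 2 ≤ n := by omega
    omega
end

section
/- Breaking lumps into high-degree pairings: let B = {B₁, B₂, …} be a partition of {1,…,n} and set s(B) := (1/2) Σ{|B_j| : |B_j| ≥ 4}. Then there exists a permutation π ∈ S_n compatible with B such that deg(π) ≥ s(B)/2. -/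
namespace LumpAux

open Finset Equiv

variable {n : ℕ}

def Dset (n : ℕ) (b : Finset (Fin n)) : Finset (Equiv.Perm (Fin n)) :=
  Finset.univ.filter fun g => ∀ i, i ∉ b → g i = i

lemma mem_Dset {b : Finset (Fin n)} {g : Equiv.Perm (Fin n)} :
    g ∈ Dset n b ↔ ∀ i, i ∉ b → g i = i := by simp [Dset]

lemma one_mem_Dset (b : Finset (Fin n)) : (1 : Equiv.Perm (Fin n)) ∈ Dset n b :=
  mem_Dset.2 fun i _ => rfl

lemma Dset_maps {b : Finset (Fin n)} {g : Equiv.Perm (Fin n)} (hg : g ∈ Dset n b)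
    {i : Fin n} (hi : i ∈ b) : g i ∈ b := by
  by_contra h
  have h2 : g (g i) = g i := mem_Dset.1 hg (g i) h
  have h3 : g i = i := g.injective h2
  rw [h3] at h; exact h hi

lemma mul_mem_Dset {b : Finset (Fin n)} {g h : Equiv.Perm (Fin n)}
    (hg : g ∈ Dset n b) (hh : h ∈ Dset n b) : g * h ∈ Dset n b := by
  refine mem_Dset.2 fun i hi => ?_
  have := mem_Dset.1 hh i hi
  simp only [Equiv.Perm.mul_apply, this]
  exact mem_Dset.1 hg i hi

lemma inv_mem_Dset {b : Finset (Fin n)} {g : Equiv.Perm (Fin n)}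
    (hg : g ∈ Dset n b) : g⁻¹ ∈ Dset n b := by
  refine mem_Dset.2 fun i hi => ?_
  have := mem_Dset.1 hg i hi
  conv_lhs => rw [← this]
  simp

lemma swap_mem_Dset {b : Finset (Fin n)} {x y : Fin n} (hx : x ∈ b) (hy : y ∈ b) :
    Equiv.swap x y ∈ Dset n b := by
  refine mem_Dset.2 fun i hi => ?_
  exact Equiv.swap_apply_of_ne_of_ne (fun h => hi (h ▸ hx)) (fun h => hi (h ▸ hy))

/-- single-point fiber equicardinality -/
lemma fiber_single {b : Finset (Fin n)} (u : Fin n) {x y : Fin n} (hx : x ∈ b) (hy : y ∈ b) :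
    ((Dset n b).filter fun g => g u = x).card = ((Dset n b).filter fun g => g u = y).card := by
  apply Finset.card_bij (fun g _ => Equiv.swap x y * g)
  · intro g hg
    simp only [mem_filter] at hg ⊢
    refine ⟨mul_mem_Dset (swap_mem_Dset hx hy) hg.1, ?_⟩
    simp [hg.2]
  · intro g hg g' hg' h
    exact mul_left_cancel h
  · intro g hg
    simp only [mem_filter] at hg
    refine ⟨Equiv.swap x y * g, ?_, ?_⟩
    · simp only [mem_filter]
      refine ⟨mul_mem_Dset (swap_mem_Dset hx hy) hg.1, ?_⟩
      simp [hg.2, Equiv.swap_apply_right]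
    · rw [← mul_assoc, Equiv.swap_mul_self, one_mul]

/-- two-point fiber equicardinality (first coordinate fixed) -/
lemma fiber_pair {b : Finset (Fin n)} (u u' : Fin n) {x y y' : Fin n}
    (hy : y ∈ b) (hy' : y' ∈ b) (hxy : y ≠ x) (hxy' : y' ≠ x) :
    ((Dset n b).filter fun g => g u' = x ∧ g u = y).card
      = ((Dset n b).filter fun g => g u' = x ∧ g u = y').card := by
  apply Finset.card_bij (fun g _ => Equiv.swap y y' * g)
  · intro g hg
    simp only [mem_filter] at hg ⊢
    refine ⟨mul_mem_Dset (swap_mem_Dset hy hy') hg.1, ?_, ?_⟩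
    · simp only [Equiv.Perm.mul_apply, hg.2.1]
      exact Equiv.swap_apply_of_ne_of_ne (Ne.symm hxy) (Ne.symm hxy')
    · simp [hg.2.2]
  · intro g hg g' hg' h
    exact mul_left_cancel h
  · intro g hg
    simp only [mem_filter] at hg
    refine ⟨Equiv.swap y y' * g, ?_, ?_⟩
    · simp only [mem_filter]
      refine ⟨mul_mem_Dset (swap_mem_Dset hy hy') hg.1, ?_, ?_⟩
      · simp only [Equiv.Perm.mul_apply, hg.2.1]
        exact Equiv.swap_apply_of_ne_of_ne (Ne.symm hxy) (Ne.symm hxy')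
      · simp [hg.2.2, Equiv.swap_apply_right]
    · rw [← mul_assoc, Equiv.swap_mul_self, one_mul]


lemma Dset_card_fiberwise {b : Finset (Fin n)} {u : Fin n} (hu : u ∈ b) :
    (Dset n b).card = ∑ x ∈ b, ((Dset n b).filter fun g => g u = x).card :=
  Finset.card_eq_sum_card_fiberwise fun g hg => Dset_maps hg hu

/-- F1: single value pinned -/
lemma F1 {b : Finset (Fin n)} {u : Fin n} (hu : u ∈ b) (c : ℕ) :
    b.card * ((Dset n b).filter fun g => (g u).val = c).card ≤ (Dset n b).card := by
  by_cases hc : c < n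
  · set y : Fin n := ⟨c, hc⟩ with hy
    have hfe : ((Dset n b).filter fun g => (g u).val = c)
        = (Dset n b).filter fun g => g u = y := by
      apply Finset.filter_congr
      intro g _
      simp [Fin.ext_iff, hy]
    rw [hfe]
    by_cases hyb : y ∈ b
    · rw [Dset_card_fiberwise hu]
      calc b.card * ((Dset n b).filter fun g => g u = y).card
          = ∑ _x ∈ b, ((Dset n b).filter fun g => g u = y).card := by
            rw [Finset.sum_const, smul_eq_mul]
        _ ≤ ∑ x ∈ b, ((Dset n b).filter fun g => g u = x).card := by
            apply Finset.sum_le_sum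
            intro x hx
            rw [fiber_single u hyb hx]
    · have : ((Dset n b).filter fun g => g u = y) = ∅ := by
        rw [Finset.filter_eq_empty_iff]
        intro g hg hgu
        exact hyb (hgu ▸ Dset_maps hg hu)
      simp [this]
  · have : ((Dset n b).filter fun g => (g u).val = c) = ∅ := by
      rw [Finset.filter_eq_empty_iff]
      intro g _ hgu
      exact hc (hgu ▸ (g u).isLt)
    simp [this]

/-- F2: consecutive values at two points of b -/
lemma F2 {b : Finset (Fin n)} {u u' : Fin n} (hu : u ∈ b) (hu' : u' ∈ b) (hne : u ≠ u') :
    b.card * ((Dset n b).filter fun g => (g u).val = (g u').val + 1).card ≤ (Dset n b).card := by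
  classical
  set D := Dset n b with hD
  set A := D.filter (fun g => (g u).val = (g u').val + 1) with hA
  have hbne : b.Nonempty := ⟨u, hu⟩
  set M := b.max' hbne with hM
  have hMb : M ∈ b := b.max'_mem hbne
  have hm2 : 2 ≤ b.card := Finset.one_lt_card.2 ⟨u, hu, u', hu', hne⟩
  -- fiberwise decomposition of A over value of g u'
  have hAfib : A.card = ∑ x ∈ b, (A.filter fun g => g u' = x).card := by
    apply Finset.card_eq_sum_card_fiberwise
    intro g hg
    exact Dset_maps (Finset.mem_filter.1 hg).1 hu'
  -- the fiber at M is empty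
  have hMzero : (A.filter fun g => g u' = M).card = 0 := by
    rw [Finset.card_eq_zero, Finset.filter_eq_empty_iff]
    intro g hg hgM
    have hgD : g ∈ D := (Finset.mem_filter.1 hg).1
    have h1 : (g u).val = (g u').val + 1 := (Finset.mem_filter.1 hg).2
    have h2 : g u ∈ b := Dset_maps hgD hu
    have h3 : g u ≤ M := b.le_max' _ h2
    rw [hgM] at h1
    have : (g u).val ≤ M.val := h3
    omega
  -- per-fiber bound: for every x ∈ b, b.card * ((b.card - 1) * fiber) ≤ D.card
  have hfibbound : ∀ x ∈ b,
      b.card * ((b.card - 1) * (A.filter fun g => g u' = x).card) ≤ D.card := by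
    intro x hx
    by_cases hxn : x.val + 1 < n
    · set y : Fin n := ⟨x.val + 1, hxn⟩ with hy
      by_cases hyb : y ∈ b
      · have hyx : y ≠ x := by simp [hy, Fin.ext_iff]
        have hfe : (A.filter fun g => g u' = x)
            = D.filter fun g => g u' = x ∧ g u = y := by
          rw [hA, Finset.filter_filter]
          apply Finset.filter_congr
          intro g _
          constructor
          · rintro ⟨h1, h2⟩; exact ⟨h2, by simp [Fin.ext_iff, hy, h2 ▸ h1, h1, h2]⟩
          · rintro ⟨h1, h2⟩; exact ⟨by simp [h2, hy, h1], h1⟩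
        rw [hfe]
        -- (b.card - 1) * |P_{x,y}| ≤ |G_x| ; b.card * |G_x| ≤ ... = D.card
        have hGfib : (D.filter fun g => g u' = x).card
            = ∑ z ∈ b, ((D.filter fun g => g u' = x).filter fun g => g u = z).card := by
          apply Finset.card_eq_sum_card_fiberwise
          intro g hg
          exact Dset_maps (Finset.mem_filter.1 hg).1 hu
        have hPP : ∀ z ∈ b.erase x,
            ((D.filter fun g => g u' = x).filter fun g => g u = z).card
              = (D.filter fun g => g u' = x ∧ g u = y).card := by
          intro z hz
          rw [Finset.filter_filter]
          exact fiber_pair u u' (Finset.mem_of_mem_erase hz) hyb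
            (Finset.ne_of_mem_erase hz) hyx
        have hstep1 : (b.card - 1) * (D.filter fun g => g u' = x ∧ g u = y).card
            ≤ (D.filter fun g => g u' = x).card := by
          rw [hGfib]
          have : ∑ z ∈ b.erase x,
              ((D.filter fun g => g u' = x).filter fun g => g u = z).card
              ≤ ∑ z ∈ b, ((D.filter fun g => g u' = x).filter fun g => g u = z).card :=
            Finset.sum_le_sum_of_subset (Finset.erase_subset _ _)
          calc (b.card - 1) * (D.filter fun g => g u' = x ∧ g u = y).card
              = ∑ _z ∈ b.erase x, (D.filter fun g => g u' = x ∧ g u = y).card := by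
                rw [Finset.sum_const, smul_eq_mul, Finset.card_erase_of_mem hx]
            _ = ∑ z ∈ b.erase x,
                ((D.filter fun g => g u' = x).filter fun g => g u = z).card :=
                (Finset.sum_congr rfl fun z hz => (hPP z hz).symm)
            _ ≤ _ := this
        have hstep2 : b.card * (D.filter fun g => g u' = x).card ≤ D.card := by
          rw [Dset_card_fiberwise hu']
          calc b.card * (D.filter fun g => g u' = x).card
              = ∑ _z ∈ b, (D.filter fun g => g u' = x).card := by
                rw [Finset.sum_const, smul_eq_mul]
            _ ≤ ∑ z ∈ b, (D.filter fun g => g u' = z).card := by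
                apply Finset.sum_le_sum
                intro z hz
                rw [fiber_single u' hx hz]
        calc b.card * ((b.card - 1) * (D.filter fun g => g u' = x ∧ g u = y).card)
            ≤ b.card * (D.filter fun g => g u' = x).card :=
              Nat.mul_le_mul_left _ hstep1
          _ ≤ D.card := hstep2
      · have : (A.filter fun g => g u' = x) = ∅ := by
          rw [Finset.filter_eq_empty_iff]
          intro g hg hgx
          have hgD : g ∈ D := (Finset.mem_filter.1 hg).1
          have h1 : (g u).val = (g u').val + 1 := (Finset.mem_filter.1 hg).2
          have h2 : g u ∈ b := Dset_maps hgD hu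
          apply hyb
          have : g u = y := by rw [hy]; apply Fin.ext; simp [h1, hgx]
          exact this ▸ h2
        simp [this]
    · have : (A.filter fun g => g u' = x) = ∅ := by
        rw [Finset.filter_eq_empty_iff]
        intro g hg hgx
        have h1 : (g u).val = (g u').val + 1 := (Finset.mem_filter.1 hg).2
        have := (g u).isLt
        rw [hgx] at h1
        omega
      simp [this]
  -- combine
  have hsum : b.card * ((b.card - 1) * A.card) ≤ (b.card - 1) * D.card := by
    have : (b.card - 1) * A.card = ∑ x ∈ b.erase M, (b.card - 1) * (A.filter fun g => g u' = x).card := by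
      rw [← Finset.mul_sum]
      congr 1
      rw [hAfib, ← Finset.add_sum_erase _ _ hMb, hMzero, zero_add]
    rw [this, Finset.mul_sum]
    calc ∑ x ∈ b.erase M, b.card * ((b.card - 1) * (A.filter fun g => g u' = x).card)
        ≤ ∑ _x ∈ b.erase M, D.card :=
          Finset.sum_le_sum fun x hx => hfibbound x (Finset.mem_of_mem_erase hx)
      _ = (b.card - 1) * D.card := by
          rw [Finset.sum_const, smul_eq_mul, Finset.card_erase_of_mem hMb]
  -- cancel (b.card - 1)
  have hpos : 0 < b.card - 1 := by omega
  have : (b.card - 1) * (b.card * A.card) ≤ (b.card - 1) * D.card := by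
    calc (b.card - 1) * (b.card * A.card) = b.card * ((b.card - 1) * A.card) := by ring
      _ ≤ (b.card - 1) * D.card := hsum
  exact Nat.le_of_mul_le_mul_left this hpos


def Cset (n : ℕ) (B : Finpartition (Finset.univ : Finset (Fin n))) :
    Finset (Equiv.Perm (Fin n)) :=
  Finset.univ.filter fun π => ∀ b ∈ B.parts, ∀ i ∈ b, π i ∈ b

lemma mem_Cset {B : Finpartition (Finset.univ : Finset (Fin n))} {π : Equiv.Perm (Fin n)} :
    π ∈ Cset n B ↔ ∀ b ∈ B.parts, ∀ i ∈ b, π i ∈ b := by simp [Cset]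

lemma one_mem_Cset (B : Finpartition (Finset.univ : Finset (Fin n))) :
    (1 : Equiv.Perm (Fin n)) ∈ Cset n B :=
  mem_Cset.2 fun _ _ _ hi => hi

lemma Cset_notMem {B : Finpartition (Finset.univ : Finset (Fin n))}
    {π : Equiv.Perm (Fin n)} (hπ : π ∈ Cset n B) {b : Finset (Fin n)} (hb : b ∈ B.parts)
    {i : Fin n} (hi : i ∉ b) : π i ∉ b := by
  obtain ⟨b', hb', hib'⟩ := B.exists_mem (Finset.mem_univ i)
  have hne : b' ≠ b := fun h => hi (h ▸ hib')
  have hπi : π i ∈ b' := mem_Cset.1 hπ b' hb' i hib'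
  have hdisj : Disjoint b' b := B.disjoint hb' hb hne
  exact Finset.disjoint_left.1 hdisj hπi

lemma Cset_mul {B : Finpartition (Finset.univ : Finset (Fin n))} {b : Finset (Fin n)}
    (hb : b ∈ B.parts) {g π : Equiv.Perm (Fin n)} (hg : g ∈ Dset n b)
    (hπ : π ∈ Cset n B) : g * π ∈ Cset n B := by
  refine mem_Cset.2 fun b' hb' i hi => ?_
  have hπi : π i ∈ b' := mem_Cset.1 hπ b' hb' i hi
  show g (π i) ∈ b'
  by_cases hbb : b' = b
  · subst hbb; exact Dset_maps hg hπi
  · have hdisj : Disjoint b' b := B.disjoint hb' hb hbb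
    have : π i ∉ b := Finset.disjoint_left.1 hdisj hπi
    rw [mem_Dset.1 hg _ this]
    exact hπi

lemma permExt_apply (σ : Equiv.Perm (Fin n)) (j : Fin n) :
    permExt n σ (j.val + 1) = (σ j).val + 1 := by
  have h : 1 ≤ j.val + 1 ∧ j.val + 1 ≤ n := ⟨by omega, by have := j.isLt; omega⟩
  rw [permExt, dif_pos h]
  have h2 : (⟨j.val + 1 - 1, by omega⟩ : Fin n) = j := Fin.ext (by simp)
  rw [h2]

lemma permExt_of_not (σ : Equiv.Perm (Fin n)) {k : ℕ} (h : ¬(1 ≤ k ∧ k ≤ n)) :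
    permExt n σ k = k := dif_neg h

/-- Core neighbor-count: for j in block b, and neighbor index k ≠ j+1 -/
lemma core_nbr {B : Finpartition (Finset.univ : Finset (Fin n))} {b : Finset (Fin n)}
    (hb : b ∈ B.parts) {j : Fin n} (hj : j ∈ b) {π : Equiv.Perm (Fin n)}
    (hπ : π ∈ Cset n B) {k : ℕ} (hk : k ≠ j.val + 1) :
    b.card * ((Dset n b).filter fun g => ((g * π) j).val = permExt n (g * π) k).card
      ≤ (Dset n b).card := by
  have hu : π j ∈ b := mem_Cset.1 hπ b hb j hj
  by_cases hkr : 1 ≤ k ∧ k ≤ n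
  · -- neighbor is a genuine position
    set i : Fin n := ⟨k - 1, by omega⟩ with hi
    have hij : i ≠ j := by
      intro h
      apply hk
      have : k - 1 = j.val := by rw [← h]
      omega
    have hperm : ∀ g : Equiv.Perm (Fin n),
        permExt n (g * π) k = ((g * π) i).val + 1 := by
      intro g
      rw [permExt, dif_pos hkr]
    by_cases hib : i ∈ b
    · -- same block: use F2
      have hu' : π i ∈ b := mem_Cset.1 hπ b hb i hib
      have hne : π j ≠ π i := fun h => hij (π.injective h).symm
      have hfe : ((Dset n b).filter fun g => ((g * π) j).val = permExt n (g * π) k)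
          = (Dset n b).filter fun g => (g (π j)).val = (g (π i)).val + 1 := by
        apply Finset.filter_congr
        intro g _
        rw [hperm g]
        rfl
      rw [hfe]
      exact F2 hu hu' hne
    · -- different block: neighbor value is constant
      have hπi : π i ∉ b := Cset_notMem hπ hb hib
      have hfe : ((Dset n b).filter fun g => ((g * π) j).val = permExt n (g * π) k)
          = (Dset n b).filter fun g => (g (π j)).val = (π i).val + 1 := by
        apply Finset.filter_congr
        intro g hg
        rw [hperm g]
        have : (g * π) i = π i := by
          show g (π i) = π i
          exact mem_Dset.1 (by simpa using hg) _ hπi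
        rw [this]
        rfl
      rw [hfe]
      exact F1 hu _
  · -- boundary: permExt = k constant
    have hfe : ((Dset n b).filter fun g => ((g * π) j).val = permExt n (g * π) k)
        = (Dset n b).filter fun g => (g (π j)).val = k := by
      apply Finset.filter_congr
      intro g _
      rw [permExt_of_not _ hkr]
      rfl
    rw [hfe]
    exact F1 hu k

/-- Core lemma: each position of a big block is a ladder for at most half of C -/
lemma core {B : Finpartition (Finset.univ : Finset (Fin n))} {b : Finset (Fin n)}
    (hb : b ∈ B.parts) (hm : 4 ≤ b.card) {j : Fin n} (hj : j ∈ b) :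
    2 * ((Cset n B).filter fun π => IsLadder n π j).card ≤ (Cset n B).card := by
  classical
  set C := Cset n B with hC
  set D := Dset n b with hD
  have hDpos : 0 < D.card := Finset.card_pos.2 ⟨1, one_mem_Dset b⟩
  -- per-π bound
  have perπ : ∀ π ∈ C, 2 * (D.filter fun g => IsLadder n (g * π) j).card ≤ D.card := by
    intro π hπ
    have h1 := core_nbr hb hj hπ (k := j.val) (by omega)
    have h2 := core_nbr hb hj hπ (k := j.val + 2) (by omega)
    have hsub : (D.filter fun g => IsLadder n (g * π) j)
        ⊆ (D.filter fun g => ((g * π) j).val = permExt n (g * π) j.val)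
          ∪ (D.filter fun g => ((g * π) j).val = permExt n (g * π) (j.val + 2)) := by
      intro g hg
      simp only [Finset.mem_filter, Finset.mem_union] at hg ⊢
      obtain ⟨hgD, hlad⟩ := hg
      have hpe := permExt_apply (g * π) j
      rcases hlad.1 with h | h
      · exact Or.inl ⟨hgD, by omega⟩
      · exact Or.inr ⟨hgD, by omega⟩
    have hcard : (D.filter fun g => IsLadder n (g * π) j).card
        ≤ (D.filter fun g => ((g * π) j).val = permExt n (g * π) j.val).card
          + (D.filter fun g => ((g * π) j).val = permExt n (g * π) (j.val + 2)).card :=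
      le_trans (Finset.card_le_card hsub) (Finset.card_union_le _ _)
    have hmul : b.card * (D.filter fun g => IsLadder n (g * π) j).card ≤ 2 * D.card := by
      calc b.card * (D.filter fun g => IsLadder n (g * π) j).card
          ≤ b.card * ((D.filter fun g => ((g * π) j).val = permExt n (g * π) j.val).card
            + (D.filter fun g => ((g * π) j).val = permExt n (g * π) (j.val + 2)).card) :=
            Nat.mul_le_mul_left _ hcard
        _ = b.card * (D.filter fun g => ((g * π) j).val = permExt n (g * π) j.val).card
            + b.card * (D.filter fun g => ((g * π) j).val = permExt n (g * π) (j.val + 2)).card := by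
            ring
        _ ≤ D.card + D.card := Nat.add_le_add h1 h2
        _ = 2 * D.card := by ring
    have h4 : 4 * (D.filter fun g => IsLadder n (g * π) j).card
        ≤ b.card * (D.filter fun g => IsLadder n (g * π) j).card :=
      Nat.mul_le_mul_right _ hm
    omega
  -- double counting
  have swap : ∑ π ∈ C, (D.filter fun g => IsLadder n (g * π) j).card
      = ∑ g ∈ D, (C.filter fun π => IsLadder n (g * π) j).card := by
    simp_rw [Finset.card_filter]
    exact Finset.sum_comm
  have reindex : ∀ g ∈ D, (C.filter fun π => IsLadder n (g * π) j).card
      = (C.filter fun π => IsLadder n π j).card := by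
    intro g hg
    apply Finset.card_bij' (i := fun π _ => g * π) (j := fun σ _ => g⁻¹ * σ)
    · intro π hπ
      simp only [Finset.mem_filter] at hπ ⊢
      exact ⟨Cset_mul hb hg hπ.1, hπ.2⟩
    · intro σ hσ
      simp only [Finset.mem_filter] at hσ ⊢
      constructor
      · exact Cset_mul hb (inv_mem_Dset hg) hσ.1
      · have : g * (g⁻¹ * σ) = σ := by group
        rw [this]
        exact hσ.2
    · intro π _; group
    · intro σ _; group
  have key : D.card * (C.filter fun π => IsLadder n π j).card
      = ∑ π ∈ C, (D.filter fun g => IsLadder n (g * π) j).card := by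
    rw [swap, Finset.sum_congr rfl reindex, Finset.sum_const, smul_eq_mul]
  have hfinal : D.card * (2 * (C.filter fun π => IsLadder n π j).card) ≤ D.card * C.card := by
    calc D.card * (2 * (C.filter fun π => IsLadder n π j).card)
        = 2 * (D.card * (C.filter fun π => IsLadder n π j).card) := by ring
      _ = 2 * ∑ π ∈ C, (D.filter fun g => IsLadder n (g * π) j).card := by rw [key]
      _ = ∑ π ∈ C, 2 * (D.filter fun g => IsLadder n (g * π) j).card := by
          rw [Finset.mul_sum]
      _ ≤ ∑ _π ∈ C, D.card := Finset.sum_le_sum perπ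
      _ = C.card * D.card := by rw [Finset.sum_const, smul_eq_mul]
      _ = D.card * C.card := by ring
  exact Nat.le_of_mul_le_mul_left hfinal hDpos


end LumpAux

open LumpAux in
/-- Breaking lumps into high-degree pairings: for any partition `B` of `{1,…,n}`,
with `s(B) = (1/2) Σ {|B_j| : |B_j| ≥ 4}`, there is a permutation `π` compatible with
`B` (i.e. mapping each block into itself) such that `deg(π) ≥ s(B)/2`, i.e.
`Σ {|B_j| : |B_j| ≥ 4} ≤ 4 deg(π)`. -/
theorem lump_breakup (n : ℕ) (B : Finpartition (Finset.univ : Finset (Fin n))) :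
    ∃ π : Equiv.Perm (Fin n),
      (∀ b ∈ B.parts, ∀ i ∈ b, π i ∈ b) ∧
      (∑ b ∈ B.parts.filter fun b => 4 ≤ b.card, b.card) ≤ 4 * permDeg n π := by
  classical
  set C := Cset n B with hC
  have hCne : C.Nonempty := ⟨1, one_mem_Cset B⟩
  set big := B.parts.filter fun b => 4 ≤ b.card with hbig
  set bigpos : Finset (Fin n) := big.biUnion id with hbigpos
  have hdisj : ∀ b ∈ big, ∀ b' ∈ big, b ≠ b' → Disjoint (id b) (id b') := by
    intro b hb b' hb' hne
    exact B.disjoint (Finset.mem_filter.1 hb).1 (Finset.mem_filter.1 hb').1 hne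
  have hposcard : bigpos.card = ∑ b ∈ big, b.card := Finset.card_biUnion hdisj
  -- sum of big block sizes = bigpos.card
  have hgoalLHS : (∑ b ∈ B.parts.filter fun b => 4 ≤ b.card, b.card) = bigpos.card := by
    rw [hposcard]
  -- per-position core bound
  have hcore : ∀ j ∈ bigpos, 2 * (C.filter fun π => IsLadder n π j).card ≤ C.card := by
    intro j hj
    obtain ⟨b, hbmem, hjb⟩ := Finset.mem_biUnion.1 hj
    have hb := Finset.mem_filter.1 hbmem
    exact core hb.1 hb.2 hjb
  -- pigeonhole
  set X : Equiv.Perm (Fin n) → ℕ := fun π => (bigpos.filter fun j => IsLadder n π j).card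
    with hX
  have hsum : ∑ π ∈ C, 2 * X π ≤ ∑ π ∈ C, bigpos.card := by
    have h1 : ∑ π ∈ C, X π = ∑ j ∈ bigpos, (C.filter fun π => IsLadder n π j).card := by
      simp_rw [hX, Finset.card_filter]
      exact Finset.sum_comm
    calc ∑ π ∈ C, 2 * X π = 2 * ∑ π ∈ C, X π := by rw [Finset.mul_sum]
      _ = ∑ j ∈ bigpos, 2 * (C.filter fun π => IsLadder n π j).card := by
          rw [h1, Finset.mul_sum]
      _ ≤ ∑ _j ∈ bigpos, C.card := Finset.sum_le_sum hcore
      _ = bigpos.card * C.card := by rw [Finset.sum_const, smul_eq_mul]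
      _ = ∑ _π ∈ C, bigpos.card := by rw [Finset.sum_const, smul_eq_mul, mul_comm]
  obtain ⟨π, hπC, hπle⟩ := Finset.exists_le_of_sum_le hCne hsum
  refine ⟨π, mem_Cset.1 hπC, ?_⟩
  -- final arithmetic
  have h2 : (Finset.univ.filter fun j : Fin n => IsLadder n π j).card
      ≤ X π + (n - bigpos.card) := by
    have hsplit : (Finset.univ : Finset (Fin n)) = bigpos ∪ (Finset.univ \ bigpos) := by
      rw [Finset.union_sdiff_of_subset (Finset.subset_univ _)]
    have : (Finset.univ.filter fun j : Fin n => IsLadder n π j)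
        ⊆ (bigpos.filter fun j => IsLadder n π j) ∪ ((Finset.univ \ bigpos).filter
          fun j => IsLadder n π j) := by
      rw [← Finset.filter_union, ← hsplit]
    calc (Finset.univ.filter fun j : Fin n => IsLadder n π j).card
        ≤ ((bigpos.filter fun j => IsLadder n π j) ∪ ((Finset.univ \ bigpos).filter
          fun j => IsLadder n π j)).card := Finset.card_le_card this
      _ ≤ X π + ((Finset.univ \ bigpos).filter fun j => IsLadder n π j).card :=
          Finset.card_union_le _ _
      _ ≤ X π + (Finset.univ \ bigpos).card :=
          Nat.add_le_add_left (Finset.card_le_card (Finset.filter_subset _ _)) _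
      _ = X π + (n - bigpos.card) := by
          rw [Finset.card_sdiff_of_subset (Finset.subset_univ _), Finset.card_univ, Fintype.card_fin]
  have h3 : bigpos.card ≤ n := by
    have := Finset.card_le_card (Finset.subset_univ bigpos)
    rwa [Finset.card_univ, Fintype.card_fin] at this
  rw [hgoalLHS]
  rw [permDeg]
  omega
end
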